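/- arXiv:1307.1162 — 6 statements merged into one kernel-verified Lean document; each statement's English description precedes it below -/
import Mathlib

section
/- Let ℋ be a complex Hilbert space, let H_fr and V be bounded self-adjoint operators on ℋ, and let ε > 0. For λ ∈ ℝ and t ∈ ℝ set H_{ε,λ}(t) := H_fr + λ e^{−ε|t|} V. Suppose U : ℝ×ℝ×ℝ → B(ℋ), (λ,t₊,t₋) ↦ U_{ε,λ}(t₊,t₋), is continuously differentiable in operator norm in all variables and satisfies ∂_{t₊}U_{ε,λ}(t₊,t₋) = −i H_{ε,λ}(t₊) U_{ε,λ}(t₊,t₋), ∂_{t₋}U_{ε,λ}(t₊,t₋) = i U_{ε,λ}(t₊,t₋) H_{ε,λ}(t₋), and U_{ε,λ}(t,t) = 1 for all t. Then: (i) whenever 0 ≥ t₊ ≥ t₋, one has i ε λ ∂_λ U_{ε,λ}(t₊,t₋) = H_{ε,λ}(t₊) U_{ε,λ}(t₊,t₋) − U_{ε,λ}(t₊,t₋) H_{ε,λ}(t₋); (ii) whenever t₊ ≥ t₋ ≥ 0, one has i ε λ ∂_λ U_{ε,λ}(t₊,t₋) = −H_{ε,λ}(t₊) U_{ε,λ}(t₊,t₋)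 + U_{ε,λ}(t₊,t₋) H_{ε,λ}(t₋). -/
set_option synthInstance.maxHeartbeats 1000000
set_option maxHeartbeats 1000000
open Topology

/-- Gell-Mann–Low adiabatic switching: the basic differential identity for the
adiabatically switched dynamics. -/
theorem stmt_0
    {ℋ : Type*} [NormedAddCommGroup ℋ] [InnerProductSpace ℂ ℋ] [CompleteSpace ℋ]
    (Hfr V : ℋ →L[ℂ] ℋ) (hHfr : IsSelfAdjoint Hfr) (hV : IsSelfAdjoint V)
    (ε : ℝ) (hε : 0 < ε)
    (Ham : ℝ → ℝ → (ℋ →L[ℂ] ℋ))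
    (hHam : ∀ lam t : ℝ, Ham lam t = Hfr + ((lam * Real.exp (-(ε * |t|)) : ℝ) : ℂ) • V)
    (U : ℝ → ℝ → ℝ → (ℋ →L[ℂ] ℋ))
    (hUC1 : ContDiff ℝ 1 (fun q : ℝ × ℝ × ℝ => U q.1 q.2.1 q.2.2))
    (hUderivPlus : ∀ lam tp tm : ℝ,
      HasDerivAt (fun s => U lam s tm) (-(Complex.I • ((Ham lam tp) ∘L (U lam tp tm)))) tp)
    (hUderivMinus : ∀ lam tp tm : ℝ,
      HasDerivAt (fun s => U lam tp s) (Complex.I • ((U lam tp tm) ∘L (Ham lam tm))) tm)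
    (hUid : ∀ lam t : ℝ, U lam t t = 1) :
    ∀ lam tp tm : ℝ,
      (tp ≤ 0 → tm ≤ tp →
        (Complex.I * (ε : ℂ) * (lam : ℂ)) • deriv (fun l => U l tp tm) lam
          = (Ham lam tp) ∘L (U lam tp tm) - (U lam tp tm) ∘L (Ham lam tm)) ∧
      (tm ≤ tp → 0 ≤ tm →
        (Complex.I * (ε : ℂ) * (lam : ℂ)) • deriv (fun l => U l tp tm) lam
          = -((Ham lam tp) ∘L (U lam tp tm)) + (U lam tp tm) ∘L (Ham lam tm)) := by
  have hreal : ∀ (r : ℝ) (X : ℋ →L[ℂ] ℋ), r • X = ((r : ℂ)) • X := by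
    intro r X
    rw [← algebraMap_smul ℂ r X]
    norm_num
  -- composition law
  have hcomp : ∀ lam a b c : ℝ, (U lam a b) ∘L (U lam b c) = U lam a c := by
    intro lam a b c
    have hdiff : ∀ x : ℝ, HasDerivAt (fun y => (U lam a y) ∘L (U lam y c)) 0 x := by
      intro x
      have h1 := hUderivMinus lam a x
      have h2 := hUderivPlus lam x c
      have h3 : HasDerivAt (fun y => (U lam a y) ∘L (U lam y c))
          ((Complex.I • ((U lam a x) ∘L (Ham lam x))) ∘L (U lam x c)
            + (U lam a x) ∘L (-(Complex.I • ((Ham lam x) ∘L (U lam x c))))) x := by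
        simpa only [Pi.mul_def, ContinuousLinearMap.mul_def] using h1.mul h2
      have e : (Complex.I • ((U lam a x) ∘L (Ham lam x))) ∘L (U lam x c)
          + (U lam a x) ∘L (-(Complex.I • ((Ham lam x) ∘L (U lam x c)))) = 0 := by
        simp [ContinuousLinearMap.smul_comp, ContinuousLinearMap.comp_smul,
          ContinuousLinearMap.comp_assoc]
      rwa [e] at h3
    have hconst := is_const_of_deriv_eq_zero (f := fun y => (U lam a y) ∘L (U lam y c))
      (fun x => (hdiff x).differentiableAt) (fun x => (hdiff x).deriv) b c
    simpa [hUid, ContinuousLinearMap.one_def] using hconst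
  -- key covariance lemma
  have hkey : ∀ lam μ s tm tp : ℝ, tm ≤ tp →
      (∀ t ∈ Set.Icc tm tp, Ham lam (t + s) = Ham μ t) →
      U lam (tp + s) (tm + s) = U μ tp tm := by
    intro lam μ s tm tp hle hham
    set Y : ℝ → (ℋ →L[ℂ] ℋ) := fun t => (U μ tm t) ∘L (U lam (t + s) (tm + s)) with hYdef
    have hX : ∀ t : ℝ, HasDerivAt (fun t => U lam (t + s) (tm + s))
        (-(Complex.I • ((Ham lam (t + s)) ∘L (U lam (t + s) (tm + s))))) t := by
      intro t
      have h3 := hUderivPlus lam (t + s) (tm + s)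
      have h4 : HasDerivAt (fun u : ℝ => u + s) 1 t := (hasDerivAt_id t).add_const s
      simpa [Function.comp_def] using h3.scomp t h4
    have hYderiv : ∀ t : ℝ, HasDerivAt Y
        ((Complex.I • ((U μ tm t) ∘L (Ham μ t))) ∘L (U lam (t + s) (tm + s))
          + (U μ tm t) ∘L (-(Complex.I • ((Ham lam (t + s)) ∘L (U lam (t + s) (tm + s)))))) t := by
      intro t
      have h1 := hUderivMinus μ tm t
      simpa only [Pi.mul_def, ContinuousLinearMap.mul_def] using h1.mul (hX t)
    have hYzero : ∀ t ∈ Set.Icc tm tp, HasDerivAt Y 0 t := by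
      intro t ht
      have h := hYderiv t
      rw [hham t ht] at h
      have e : (Complex.I • ((U μ tm t) ∘L (Ham μ t))) ∘L (U lam (t + s) (tm + s))
          + (U μ tm t) ∘L (-(Complex.I • ((Ham μ t) ∘L (U lam (t + s) (tm + s))))) = 0 := by
        simp [ContinuousLinearMap.smul_comp, ContinuousLinearMap.comp_smul,
          ContinuousLinearMap.comp_assoc]
      rwa [e] at h
    have hYconst : Y tp = Y tm := by
      have hcont : ContinuousOn Y (Set.Icc tm tp) :=
        fun x _ => ((hYderiv x).continuousAt).continuousWithinAt
      exact constant_of_has_deriv_right_zero hcont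
        (fun x hx => ((hYzero x ⟨hx.1, hx.2.le⟩).hasDerivWithinAt)) tp ⟨hle, le_rfl⟩
    have hYtm : Y tm = 1 := by
      simp [hYdef, hUid, ContinuousLinearMap.one_def]
    have h1 : (U μ tm tp) ∘L (U lam (tp + s) (tm + s)) = 1 := by
      rw [← hYtm]; exact hYconst
    have h2 := congrArg (fun A => (U μ tp tm) ∘L A) h1
    rw [← ContinuousLinearMap.comp_assoc, hcomp μ tp tm tp, hUid] at h2
    simpa [ContinuousLinearMap.one_def] using h2
  -- partial derivatives from the C¹ structure
  intro lam tp tm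
  set f : ℝ × ℝ × ℝ → (ℋ →L[ℂ] ℋ) := fun q => U q.1 q.2.1 q.2.2 with hfdef
  have hfd : HasFDerivAt f (fderiv ℝ f (lam, tp, tm)) (lam, tp, tm) :=
    ((hUC1.differentiable one_ne_zero) (lam, tp, tm)).hasFDerivAt
  set D := fderiv ℝ f (lam, tp, tm) with hDdef
  have hfd0 : HasFDerivAt f D ((lam, tp + 0, tm + 0) : ℝ × ℝ × ℝ) := by
    rw [show ((lam, tp + 0, tm + 0) : ℝ × ℝ × ℝ) = (lam, tp, tm) by simp]
    exact hfd
  have hD1 : HasDerivAt (fun l => U l tp tm) (D (1, 0, 0)) lam := by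
    have hγ : HasDerivAt (fun l : ℝ => ((l, tp, tm) : ℝ × ℝ × ℝ)) (1, 0, 0) lam :=
      (hasDerivAt_id lam).prodMk ((hasDerivAt_const lam tp).prodMk (hasDerivAt_const lam tm))
    exact hfd.comp_hasDerivAt lam hγ
  have hD2 : D (0, 1, 0) = -(Complex.I • ((Ham lam tp) ∘L (U lam tp tm))) := by
    have hγ : HasDerivAt (fun s : ℝ => ((lam, s, tm) : ℝ × ℝ × ℝ)) (0, 1, 0) tp :=
      (hasDerivAt_const tp lam).prodMk ((hasDerivAt_id tp).prodMk (hasDerivAt_const tp tm))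
    have h := hfd.comp_hasDerivAt tp hγ
    exact h.unique (hUderivPlus lam tp tm)
  have hD3 : D (0, 0, 1) = Complex.I • ((U lam tp tm) ∘L (Ham lam tm)) := by
    have hγ : HasDerivAt (fun s : ℝ => ((lam, tp, s) : ℝ × ℝ × ℝ)) (0, 0, 1) tm :=
      (hasDerivAt_const tm lam).prodMk ((hasDerivAt_const tm tp).prodMk (hasDerivAt_id tm))
    have h := hfd.comp_hasDerivAt tm hγ
    exact h.unique (hUderivMinus lam tp tm)
  have hderiv_eq : deriv (fun l => U l tp tm) lam = D (1, 0, 0) := hD1.deriv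
  -- derivative of the shifted family
  have hG : HasDerivAt (fun s => U lam (tp + s) (tm + s)) (D (0, 1, 0) + D (0, 0, 1)) 0 := by
    have hγ : HasDerivAt (fun s : ℝ => ((lam, tp + s, tm + s) : ℝ × ℝ × ℝ)) (0, 1, 1) 0 :=
      (hasDerivAt_const 0 lam).prodMk
        (((hasDerivAt_id (0:ℝ)).const_add tp).prodMk ((hasDerivAt_id (0:ℝ)).const_add tm))
    have h := hfd0.comp_hasDerivAt 0 hγ
    have e : ((0 : ℝ), (1 : ℝ), (1 : ℝ)) = ((0 : ℝ), (1 : ℝ), (0 : ℝ)) + (0, 0, 1) := by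
      simp [Prod.ext_iff]
    rw [e, map_add] at h
    exact h
  constructor
  · -- negative times
    intro htp0 htmtp
    have hF : HasDerivAt (fun s => U (lam * Real.exp (ε * s)) tp tm)
        ((lam * ε) • D (1, 0, 0)) 0 := by
      have hg : HasDerivAt (fun s : ℝ => lam * Real.exp (ε * s)) (lam * ε) 0 := by
        have h1 : HasDerivAt (fun s : ℝ => ε * s) ε 0 := by
          simpa using (hasDerivAt_id (0:ℝ)).const_mul ε
        have h2 := (Real.hasDerivAt_exp (ε * 0)).comp 0 h1
        have h3 := h2.const_mul lam
        simpa [mul_comm] using h3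
      have hγ : HasDerivAt (fun s : ℝ => ((lam * Real.exp (ε * s), tp, tm) : ℝ × ℝ × ℝ))
          ((lam * ε, 0, 0) : ℝ × ℝ × ℝ) 0 :=
        hg.prodMk ((hasDerivAt_const 0 tp).prodMk (hasDerivAt_const 0 tm))
      have hfd1 : HasFDerivAt f D ((lam * Real.exp (ε * 0), tp, tm) : ℝ × ℝ × ℝ) := by
        rw [show ((lam * Real.exp (ε * 0), tp, tm) : ℝ × ℝ × ℝ) = (lam, tp, tm) by simp]
        exact hfd
      have h := hfd1.comp_hasDerivAt 0 hγ
      have e : ((lam * ε, 0, 0) : ℝ × ℝ × ℝ) = (lam * ε) • ((1 : ℝ), (0 : ℝ), (0 : ℝ)) := by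
        simp [Prod.ext_iff]
      rw [e, map_smul] at h
      exact h
    have hFG : ∀ s ∈ Set.Iic (0:ℝ),
        U lam (tp + s) (tm + s) = U (lam * Real.exp (ε * s)) tp tm := by
      intro s hs
      apply hkey lam (lam * Real.exp (ε * s)) s tm tp htmtp
      intro t ht
      rw [hHam, hHam]
      congr 2
      have h1 : t + s ≤ 0 := add_nonpos (ht.2.trans htp0) hs
      have h2 : t ≤ 0 := ht.2.trans htp0
      rw [abs_of_nonpos h1, abs_of_nonpos h2, mul_assoc, ← Real.exp_add]
      congr 1
      ring
    have hGW : HasDerivWithinAt (fun s => U lam (tp + s) (tm + s))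
        (D (0, 1, 0) + D (0, 0, 1)) (Set.Iic 0) 0 := hG.hasDerivWithinAt
    have hFW : HasDerivWithinAt (fun s => U lam (tp + s) (tm + s))
        ((lam * ε) • D (1, 0, 0)) (Set.Iic 0) 0 :=
      hF.hasDerivWithinAt.congr hFG (hFG 0 (by simp))
    have hud : UniqueDiffWithinAt ℝ (Set.Iic (0:ℝ)) 0 := uniqueDiffOn_Iic 0 0 (by simp)
    have heq : ((lam * ε : ℝ) : ℂ) • D (1, 0, 0)
        = -(Complex.I • ((Ham lam tp) ∘L (U lam tp tm)))
          + Complex.I • ((U lam tp tm) ∘L (Ham lam tm)) := by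
      rw [← hreal, ← hD2, ← hD3, ← hFW.derivWithin hud, ← hGW.derivWithin hud]
    rw [hderiv_eq]
    have hs1 : (Complex.I * (ε : ℂ) * (lam : ℂ)) • D (1, 0, 0)
        = Complex.I • (((lam * ε : ℝ) : ℂ) • D (1, 0, 0)) := by
      rw [smul_smul]
      push_cast
      ring_nf
    rw [hs1, heq]
    simp [smul_add, smul_smul, Complex.I_mul_I, sub_eq_add_neg]
  · -- positive times
    intro htmtp htm0
    have hF : HasDerivAt (fun s => U (lam * Real.exp (-(ε * s))) tp tm)
        ((-(lam * ε)) • D (1, 0, 0)) 0 := by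
      have hg : HasDerivAt (fun s : ℝ => lam * Real.exp (-(ε * s))) (-(lam * ε)) 0 := by
        have h1 : HasDerivAt (fun s : ℝ => -(ε * s)) (-ε) 0 := by
          simpa [Pi.neg_def] using ((hasDerivAt_id (0:ℝ)).const_mul ε).neg
        have h2 := (Real.hasDerivAt_exp (-(ε * 0))).comp 0 h1
        have h3 := h2.const_mul lam
        have : lam * (Real.exp (-(ε * 0)) * -ε) = -(lam * ε) := by simp [mul_comm]
        rw [this] at h3
        exact h3
      have hγ : HasDerivAt (fun s : ℝ => ((lam * Real.exp (-(ε * s)), tp, tm) : ℝ × ℝ × ℝ))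
          ((-(lam * ε), 0, 0) : ℝ × ℝ × ℝ) 0 :=
        hg.prodMk ((hasDerivAt_const 0 tp).prodMk (hasDerivAt_const 0 tm))
      have hfd1 : HasFDerivAt f D ((lam * Real.exp (-(ε * 0)), tp, tm) : ℝ × ℝ × ℝ) := by
        rw [show ((lam * Real.exp (-(ε * 0)), tp, tm) : ℝ × ℝ × ℝ) = (lam, tp, tm) by simp]
        exact hfd
      have h := hfd1.comp_hasDerivAt 0 hγ
      have e : ((-(lam * ε), 0, 0) : ℝ × ℝ × ℝ) = (-(lam * ε)) • ((1 : ℝ), (0 : ℝ), (0 : ℝ)) := by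
        simp [Prod.ext_iff]
      rw [e, map_smul] at h
      exact h
    have hFG : ∀ s ∈ Set.Ici (0:ℝ),
        U lam (tp + s) (tm + s) = U (lam * Real.exp (-(ε * s))) tp tm := by
      intro s hs
      apply hkey lam (lam * Real.exp (-(ε * s))) s tm tp htmtp
      intro t ht
      rw [hHam, hHam]
      congr 2
      have h1 : 0 ≤ t + s := add_nonneg (htm0.trans ht.1) hs
      have h2 : 0 ≤ t := htm0.trans ht.1
      rw [abs_of_nonneg h1, abs_of_nonneg h2, mul_assoc, ← Real.exp_add]
      congr 1
      ring
    have hGW : HasDerivWithinAt (fun s => U lam (tp + s) (tm + s))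
        (D (0, 1, 0) + D (0, 0, 1)) (Set.Ici 0) 0 := hG.hasDerivWithinAt
    have hFW : HasDerivWithinAt (fun s => U lam (tp + s) (tm + s))
        ((-(lam * ε)) • D (1, 0, 0)) (Set.Ici 0) 0 :=
      hF.hasDerivWithinAt.congr hFG (hFG 0 (by simp))
    have hud : UniqueDiffWithinAt ℝ (Set.Ici (0:ℝ)) 0 := uniqueDiffOn_Ici 0 0 (by simp)
    have heq : ((-(lam * ε) : ℝ) : ℂ) • D (1, 0, 0)
        = -(Complex.I • ((Ham lam tp) ∘L (U lam tp tm)))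
          + Complex.I • ((U lam tp tm) ∘L (Ham lam tm)) := by
      rw [← hreal, ← hD2, ← hD3, ← hFW.derivWithin hud, ← hGW.derivWithin hud]
    rw [hderiv_eq]
    have hs1 : (Complex.I * (ε : ℂ) * (lam : ℂ)) • D (1, 0, 0)
        = (-Complex.I) • (((-(lam * ε) : ℝ) : ℂ) • D (1, 0, 0)) := by
      rw [smul_smul]
      push_cast
      ring_nf
    rw [hs1, heq]
    simp [smul_add, smul_smul, Complex.I_mul_I, sub_eq_add_neg]
end

section
/- Let ℋ be a complex Hilbert space, H_fr and V bounded self-adjoint operators on ℋ, ε > 0 and σ ∈ {1,−1}. For λ > 0 put H_λ := H_fr + λV. Let (0,∞) ∋ λ ↦ S_λ ∈ B(ℋ) be differentiable in operator norm and satisfy σ i ε λ S_λ' = H_λ S_λ − S_λ H_fr. Let Φ_fr ∈ ℋ be a unit vector with H_fr Φ_fr = E_fr Φ_fr for some E_fr ∈ ℝ. Then: (a) (H_λ − E_fr)(S_λ Φ_fr) = σ i ε λ (d/dλ)(S_λ Φ_fr) for all λ > 0. Moreover, if c_λ := ⟨Φ_fr, S_λΦ_fr⟩ ≠ 0 for all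 λ in an open interval I ⊆ (0,∞), and one sets Φ_λ := S_λΦ_fr / c_λ and E_λ := ⟨Φ_fr, H_λ Φ_λ⟩, then for all λ ∈ I: (b) σ i ε λ c_λ'/c_λ = E_λ − E_fr, and (c) (H_λ − E_λ)Φ_λ = σ i ε λ Φ_λ'. -/
open Topology

local notation "⟪" x ", " y "⟫" => @inner ℂ _ _ x y

/-- Gell-Mann–Low adiabatic Møller operators: eigenvalue-type equations for the
renormalized interacting vector. -/
theorem stmt_1
    {ℋ : Type*} [NormedAddCommGroup ℋ] [InnerProductSpace ℂ ℋ] [CompleteSpace ℋ]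
    (Hfr V : ℋ →L[ℂ] ℋ) (hHfr : IsSelfAdjoint Hfr) (hV : IsSelfAdjoint V)
    (ε : ℝ) (hε : 0 < ε) (σ : ℝ) (hσ : σ = 1 ∨ σ = -1)
    (S S' : ℝ → ℋ →L[ℂ] ℋ)
    (hS : ∀ lam : ℝ, 0 < lam → HasDerivAt S (S' lam) lam)
    (hODE : ∀ lam : ℝ, 0 < lam →
      ((σ : ℂ) * Complex.I * (ε : ℂ) * (lam : ℂ)) • S' lam
        = (Hfr + (lam : ℂ) • V) ∘L S lam - S lam ∘L Hfr)
    (Φfr : ℋ) (hΦfr : ‖Φfr‖ = 1)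
    (Efr : ℝ) (hEfr : Hfr Φfr = (Efr : ℂ) • Φfr) :
    (∀ lam : ℝ, 0 < lam →
      (Hfr + (lam : ℂ) • V) (S lam Φfr) - (Efr : ℂ) • (S lam Φfr)
        = ((σ : ℂ) * Complex.I * (ε : ℂ) * (lam : ℂ)) • deriv (fun l => S l Φfr) lam)
    ∧ (∀ a b : ℝ, Set.Ioo a b ⊆ Set.Ioi (0 : ℝ) →
        (∀ lam ∈ Set.Ioo a b, ⟪Φfr, S lam Φfr⟫ ≠ 0) →
        ∀ lam ∈ Set.Ioo a b,
          ((σ : ℂ) * Complex.I * (ε : ℂ) * (lam : ℂ))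
              * deriv (fun l => ⟪Φfr, S l Φfr⟫) lam / ⟪Φfr, S lam Φfr⟫
            = ⟪Φfr, (Hfr + (lam : ℂ) • V) ((⟪Φfr, S lam Φfr⟫)⁻¹ • S lam Φfr)⟫ - (Efr : ℂ)
          ∧ (Hfr + (lam : ℂ) • V) ((⟪Φfr, S lam Φfr⟫)⁻¹ • S lam Φfr)
                - ⟪Φfr, (Hfr + (lam : ℂ) • V) ((⟪Φfr, S lam Φfr⟫)⁻¹ • S lam Φfr)⟫
                    • ((⟪Φfr, S lam Φfr⟫)⁻¹ • S lam Φfr)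
            = ((σ : ℂ) * Complex.I * (ε : ℂ) * (lam : ℂ))
                • deriv (fun l => (⟪Φfr, S l Φfr⟫)⁻¹ • S l Φfr) lam) := by
  -- derivative of the vector-valued function
  have ha : ∀ lam : ℝ, 0 < lam →
      HasDerivAt (fun l => S l Φfr) (S' lam Φfr) lam := by
    intro lam h
    simpa [Function.comp_def] using ((ContinuousLinearMap.apply ℂ ℋ Φfr).restrictScalars ℝ).hasFDerivAt.comp_hasDerivAt lam (hS lam h)
  -- the ODE applied to Φfr
  have key : ∀ lam : ℝ, 0 < lam →
      ((σ : ℂ) * Complex.I * (ε : ℂ) * (lam : ℂ)) • S' lam Φfr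
        = (Hfr + (lam : ℂ) • V) (S lam Φfr) - (Efr : ℂ) • (S lam Φfr) := by
    intro lam h
    have := congrArg (fun T : ℋ →L[ℂ] ℋ => T Φfr) (hODE lam h)
    simpa [ContinuousLinearMap.sub_apply, hEfr, map_smul] using this
  have parta : ∀ lam : ℝ, 0 < lam →
      (Hfr + (lam : ℂ) • V) (S lam Φfr) - (Efr : ℂ) • (S lam Φfr)
        = ((σ : ℂ) * Complex.I * (ε : ℂ) * (lam : ℂ)) • deriv (fun l => S l Φfr) lam := by
    intro lam h
    rw [(ha lam h).deriv]
    exact (key lam h).symm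
  refine ⟨parta, ?_⟩
  intro a b hsub hc lam hlam
  have h0 : 0 < lam := hsub hlam
  set μ : ℂ := (σ : ℂ) * Complex.I * (ε : ℂ) * (lam : ℂ) with hμ
  set f : ℝ → ℋ := fun l => S l Φfr with hf
  set c : ℝ → ℂ := fun l => ⟪Φfr, S l Φfr⟫ with hcdef
  have hcne : c lam ≠ 0 := hc lam hlam
  -- derivative of c
  have hcd : HasDerivAt c ⟪Φfr, S' lam Φfr⟫ lam := by
    have := (hasDerivAt_const lam Φfr).inner ℂ (ha lam h0)
    simpa using this
  have hderivc : deriv c lam = ⟪Φfr, S' lam Φfr⟫ := hcd.deriv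
  -- μ * c' = ⟪Φfr, Hλ f⟫ - Efr * c
  have hμc : μ * deriv c lam
      = ⟪Φfr, (Hfr + (lam : ℂ) • V) (f lam)⟫ - (Efr : ℂ) * c lam := by
    rw [hderivc]
    have this : (⟪Φfr, μ • S' lam Φfr⟫ : ℂ)
        = ⟪Φfr, (Hfr + (lam : ℂ) • V) (S lam Φfr) - (Efr : ℂ) • S lam Φfr⟫ := by
      rw [key lam h0]
    rw [inner_sub_right, inner_smul_right, inner_smul_right] at this
    exact this
  -- part (b)
  have hElam : ⟪Φfr, (Hfr + (lam : ℂ) • V) ((c lam)⁻¹ • f lam)⟫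
      = (c lam)⁻¹ * ⟪Φfr, (Hfr + (lam : ℂ) • V) (f lam)⟫ := by
    rw [map_smul, inner_smul_right]
  have partb : μ * deriv c lam / c lam
      = ⟪Φfr, (Hfr + (lam : ℂ) • V) ((c lam)⁻¹ • f lam)⟫ - (Efr : ℂ) := by
    rw [hμc, hElam]
    field_simp
  refine ⟨partb, ?_⟩
  -- μ ≠ 0
  have hμne : μ ≠ 0 := by
    have hσne : (σ : ℂ) ≠ 0 := by rcases hσ with h | h <;> simp [h]
    exact mul_ne_zero (mul_ne_zero (mul_ne_zero hσne Complex.I_ne_zero)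
      (Complex.ofReal_ne_zero.mpr hε.ne')) (Complex.ofReal_ne_zero.mpr h0.ne')
  -- derivative of Φ := c⁻¹ • f
  have hinv : HasDerivAt (fun l => (c l)⁻¹)
      (-(deriv c lam) / (c lam) ^ 2) lam := by
    have := ((hasDerivAt_inv hcne).hasFDerivAt.restrictScalars ℝ).comp_hasDerivAt lam hcd
    simpa [Function.comp_def, hderivc, neg_div, div_eq_mul_inv, mul_comm] using this
  have hΦd : HasDerivAt (fun l => (c l)⁻¹ • f l)
      ((c lam)⁻¹ • S' lam Φfr + (-(deriv c lam) / (c lam) ^ 2) • f lam) lam :=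
    hinv.smul (ha lam h0)
  rw [hΦd.deriv, hElam, map_smul]
  have hw' : S' lam Φfr
      = μ⁻¹ • ((Hfr + (lam : ℂ) • V) (f lam) - (Efr : ℂ) • f lam) := by
    rw [← key lam h0, smul_smul, inv_mul_cancel₀ hμne, one_smul]
  have hd : deriv c lam
      = μ⁻¹ * (⟪Φfr, (Hfr + (lam : ℂ) • V) (f lam)⟫ - (Efr : ℂ) * c lam) := by
    rw [← hμc, ← mul_assoc, inv_mul_cancel₀ hμne, one_mul]
  rw [hw', hd]
  rw [show ⟪Φfr, S lam Φfr⟫ = c lam from rfl]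
  match_scalars <;> field_simp <;> ring
end

section
/- Let ℋ be a complex Hilbert space, Φ_fr ∈ ℋ a unit vector, and H a closed densely defined operator on ℋ. For each ε > 0 let S_ε be a unitary operator on ℋ with c_ε := ⟨Φ_fr, S_εΦ_fr⟩ ≠ 0, and set Φ_ε := S_εΦ_fr / c_ε. Assume Φ_ε lies in the domain of H and that there are E_ε ∈ ℂ and vectors Ψ_ε ∈ ℋ with HΦ_ε = E_εΦ_ε + Ψ_ε. Assume further that, as ε ↓ 0, Φ_ε converges to some Φ₀ ≠ 0, E_ε converges to some E ∈ ℂ, and Ψ_ε → 0. Then: (1) |c_ε| converges to 1/‖Φ₀‖, and the Gell-Mann–Low vector Φ_GL := lim_{ε↓0} |c_ε| Φ_ε exists and equals the unit vector Φ₀/‖Φ₀‖; (2) Φ_GL lies in the domain of H and H Φ_GL = E Φ_GL. -/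
open Topology Filter

local notation "⟪" x ", " y "⟫" => @inner ℂ _ _ x y

/-- Gell-Mann–Low theorem: convergence of the renormalized adiabatic vectors to an
eigenvector of the (closed, densely defined) Hamiltonian. -/
theorem stmt_2
    {ℋ : Type*} [NormedAddCommGroup ℋ] [InnerProductSpace ℂ ℋ] [CompleteSpace ℋ]
    (Φfr : ℋ) (hΦfr : ‖Φfr‖ = 1)
    (T : ℋ →ₗ.[ℂ] ℋ) (hTclosed : T.IsClosed) (hTdense : Dense (T.domain : Set ℋ))
    (S : ℝ → (ℋ →L[ℂ] ℋ)) (hSU : ∀ ε : ℝ, 0 < ε → S ε ∈ unitary (ℋ →L[ℂ] ℋ))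
    (c : ℝ → ℂ) (hc : ∀ ε : ℝ, 0 < ε → c ε = ⟪Φfr, S ε Φfr⟫)
    (hc0 : ∀ ε : ℝ, 0 < ε → c ε ≠ 0)
    (Φ : ℝ → ℋ) (hΦ : ∀ ε : ℝ, 0 < ε → Φ ε = (c ε)⁻¹ • (S ε Φfr))
    (hdom : ∀ ε : ℝ, 0 < ε → Φ ε ∈ T.domain)
    (Eps : ℝ → ℂ) (Ψ : ℝ → ℋ)
    (hTΦ : ∀ (ε : ℝ) (hε : 0 < ε), T ⟨Φ ε, hdom ε hε⟩ = Eps ε • Φ ε + Ψ ε)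
    (Φ₀ : ℋ) (hΦ₀ : Φ₀ ≠ 0)
    (hlimΦ : Tendsto Φ (𝓝[>] (0 : ℝ)) (𝓝 Φ₀))
    (E : ℂ) (hlimE : Tendsto Eps (𝓝[>] (0 : ℝ)) (𝓝 E))
    (hlimΨ : Tendsto Ψ (𝓝[>] (0 : ℝ)) (𝓝 0)) :
    Tendsto (fun ε => ‖c ε‖) (𝓝[>] (0 : ℝ)) (𝓝 (1 / ‖Φ₀‖))
    ∧ Tendsto (fun ε => ‖c ε‖ • Φ ε) (𝓝[>] (0 : ℝ)) (𝓝 (‖Φ₀‖⁻¹ • Φ₀))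
    ∧ ∃ hmem : ‖Φ₀‖⁻¹ • Φ₀ ∈ T.domain,
        T ⟨‖Φ₀‖⁻¹ • Φ₀, hmem⟩ = E • (‖Φ₀‖⁻¹ • Φ₀) := by
  have hself : ∀ᶠ ε in 𝓝[>] (0:ℝ), 0 < ε := self_mem_nhdsWithin
  -- norm fact
  have hnorm : ∀ ε : ℝ, 0 < ε → ‖Φ ε‖ = (‖c ε‖)⁻¹ := by
    intro ε hε
    rw [hΦ ε hε, norm_smul, (S ε).norm_map_of_mem_unitary (hSU ε hε), hΦfr, mul_one,
      norm_inv]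
  have hΦ₀norm : ‖Φ₀‖ ≠ 0 := norm_ne_zero_iff.mpr hΦ₀
  have hnormlim : Tendsto (fun ε => ‖Φ ε‖) (𝓝[>] (0:ℝ)) (𝓝 ‖Φ₀‖) :=
    hlimΦ.norm
  have h1 : Tendsto (fun ε => ‖c ε‖) (𝓝[>] (0:ℝ)) (𝓝 (1 / ‖Φ₀‖)) := by
    have : Tendsto (fun ε => ‖Φ ε‖⁻¹) (𝓝[>] (0:ℝ)) (𝓝 ‖Φ₀‖⁻¹) :=
      hnormlim.inv₀ hΦ₀norm
    rw [one_div]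
    refine this.congr' ?_
    filter_upwards [hself] with ε hε
    rw [hnorm ε hε, inv_inv]
  have h2 : Tendsto (fun ε => ‖c ε‖ • Φ ε) (𝓝[>] (0:ℝ))
      (𝓝 (‖Φ₀‖⁻¹ • Φ₀)) := by
    have := (h1.smul hlimΦ)
    rwa [one_div] at this
  refine ⟨h1, h2, ?_⟩
  -- closedness
  have hgraph : (Φ₀, E • Φ₀) ∈ T.graph := by
    have hmemF : ∀ᶠ ε in 𝓝[>] (0:ℝ), (Φ ε, Eps ε • Φ ε + Ψ ε) ∈ (T.graph : Set (ℋ × ℋ)) := by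
      filter_upwards [hself] with ε hε
      exact T.mem_graph_iff.mpr ⟨⟨Φ ε, hdom ε hε⟩, rfl, (hTΦ ε hε)⟩
    have hlim : Tendsto (fun ε => (Φ ε, Eps ε • Φ ε + Ψ ε)) (𝓝[>] (0:ℝ))
        (𝓝 (Φ₀, E • Φ₀)) := by
      have : Tendsto (fun ε => Eps ε • Φ ε + Ψ ε) (𝓝[>] (0:ℝ)) (𝓝 (E • Φ₀)) := by
        have := (hlimE.smul hlimΦ).add hlimΨ
        rwa [add_zero] at this
      exact hlimΦ.prodMk_nhds this
    exact hTclosed.mem_of_tendsto hlim hmemF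
  obtain ⟨x, hx1, hx2⟩ := T.mem_graph_iff.mp hgraph
  have hΦ₀mem : Φ₀ ∈ T.domain := by rw [show Φ₀ = ↑x from hx1.symm]; exact x.2
  have hcast : (‖Φ₀‖⁻¹ • Φ₀ : ℋ) = ((‖Φ₀‖⁻¹ : ℝ) : ℂ) • Φ₀ := by
    rw [Complex.coe_smul]
  have hmem : ‖Φ₀‖⁻¹ • Φ₀ ∈ T.domain := by
    rw [hcast]; exact T.domain.smul_mem _ hΦ₀mem
  refine ⟨hmem, ?_⟩
  have heq : (⟨‖Φ₀‖⁻¹ • Φ₀, hmem⟩ : T.domain)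
      = ((‖Φ₀‖⁻¹ : ℝ) : ℂ) • (⟨Φ₀, hΦ₀mem⟩ : T.domain) := by
    ext; simp [hcast]
  have hx : (⟨Φ₀, hΦ₀mem⟩ : T.domain) = x := by
    ext; exact hx1.symm
  rw [heq, T.map_smul, hx, hx2, hcast, smul_comm]
end

section
/- Let ℋ be a complex Hilbert space and Φ_fr ∈ ℋ a unit vector. For each ε > 0 let S_ε⁺ and S_ε⁻ be unitary operators on ℋ with c_ε^± := ⟨Φ_fr, S_ε^± Φ_fr⟩ ≠ 0; set Φ_ε^± := S_ε^± Φ_fr / c_ε^± and S_ε := (S_ε⁺)* S_ε⁻. Assume that as ε ↓ 0 the vectors Φ_ε^± converge to vectors Φ_GL^±, that Φ := Φ_GL⁺ is a unit vector, and that Φ_GL⁺ = e^{iα} Φ_GL⁻ for some α ∈ ℝ. Then ⟨Φ_fr, S_ε Φ_fr⟩ ≠ 0 for all sufficiently small ε > 0, and for every bounded operator B on ℋ one has ⟨Φ, BΦ⟩ = lim_{ε↓0} ⟨S_ε⁺Φ_fr, B S_ε⁻Φ_fr⟩ / ⟨Φ_fr, S_ε Φ_fr⟩. -/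
open Topology Filter

local notation "⟪" x ", " y "⟫" => @inner ℂ _ _ x y

/-- Gell-Mann–Low: expectation values in the interacting vector computed from the
adiabatic Møller and scattering operators. -/
theorem stmt_3
    {ℋ : Type*} [NormedAddCommGroup ℋ] [InnerProductSpace ℂ ℋ] [CompleteSpace ℋ]
    (Φfr : ℋ) (hΦfr : ‖Φfr‖ = 1)
    (Sp Sm : ℝ → (ℋ →L[ℂ] ℋ))
    (hSp : ∀ ε : ℝ, 0 < ε → Sp ε ∈ unitary (ℋ →L[ℂ] ℋ))
    (hSm : ∀ ε : ℝ, 0 < ε → Sm ε ∈ unitary (ℋ →L[ℂ] ℋ))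
    (hcp : ∀ ε : ℝ, 0 < ε → ⟪Φfr, Sp ε Φfr⟫ ≠ 0)
    (hcm : ∀ ε : ℝ, 0 < ε → ⟪Φfr, Sm ε Φfr⟫ ≠ 0)
    (ΦGLp ΦGLm : ℋ)
    (hlimp : Tendsto (fun ε => (⟪Φfr, Sp ε Φfr⟫)⁻¹ • (Sp ε Φfr)) (𝓝[>] (0 : ℝ)) (𝓝 ΦGLp))
    (hlimm : Tendsto (fun ε => (⟪Φfr, Sm ε Φfr⟫)⁻¹ • (Sm ε Φfr)) (𝓝[>] (0 : ℝ)) (𝓝 ΦGLm))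
    (hunit : ‖ΦGLp‖ = 1)
    (α : ℝ) (hphase : ΦGLp = Complex.exp (Complex.I * (α : ℂ)) • ΦGLm) :
    (∀ᶠ ε in 𝓝[>] (0 : ℝ),
      ⟪Φfr, ((ContinuousLinearMap.adjoint (Sp ε)) ∘L Sm ε) Φfr⟫ ≠ 0)
    ∧ ∀ B : ℋ →L[ℂ] ℋ,
        Tendsto (fun ε => ⟪Sp ε Φfr, B (Sm ε Φfr)⟫
            / ⟪Φfr, ((ContinuousLinearMap.adjoint (Sp ε)) ∘L Sm ε) Φfr⟫)
          (𝓝[>] (0 : ℝ)) (𝓝 ⟪ΦGLp, B ΦGLp⟫) := by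
  classical
  set e := Complex.exp (Complex.I * (α : ℂ)) with he
  have he0 : e ≠ 0 := Complex.exp_ne_zero _
  have hm : ΦGLm = e⁻¹ • ΦGLp := by
    rw [hphase, smul_smul, inv_mul_cancel₀ he0, one_smul]
  have hinner : ⟪ΦGLp, ΦGLm⟫ = e⁻¹ := by
    rw [hm, inner_smul_right, inner_self_eq_norm_sq_to_K, hunit]
    norm_num
  have hinner0 : ⟪ΦGLp, ΦGLm⟫ ≠ 0 := by rw [hinner]; exact inv_ne_zero he0
  set F : ℝ → ℂ := fun ε =>
    ⟪(⟪Φfr, Sp ε Φfr⟫)⁻¹ • (Sp ε Φfr), (⟪Φfr, Sm ε Φfr⟫)⁻¹ • (Sm ε Φfr)⟫ with hF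
  have hFt : Tendsto F (𝓝[>] (0 : ℝ)) (𝓝 ⟪ΦGLp, ΦGLm⟫) := hlimp.inner hlimm
  have hFne : ∀ᶠ ε in 𝓝[>] (0 : ℝ), F ε ≠ 0 := hFt.eventually_ne hinner0
  have hconj : ∀ ε : ℝ, 0 < ε → (starRingEnd ℂ) ⟪Φfr, Sp ε Φfr⟫ ≠ 0 := fun ε hε =>
    (map_ne_zero _).mpr (hcp ε hε)
  -- the key algebraic identities
  have key : ∀ ε : ℝ, 0 < ε →
      ⟪Φfr, ((ContinuousLinearMap.adjoint (Sp ε)) ∘L Sm ε) Φfr⟫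
        = (starRingEnd ℂ) ⟪Φfr, Sp ε Φfr⟫ * ⟪Φfr, Sm ε Φfr⟫ * F ε := by
    intro ε hε
    have h1 : ⟪Φfr, ((ContinuousLinearMap.adjoint (Sp ε)) ∘L Sm ε) Φfr⟫
        = ⟪Sp ε Φfr, Sm ε Φfr⟫ := by
      simp [ContinuousLinearMap.adjoint_inner_right]
    rw [h1, hF]
    simp only [inner_smul_left, inner_smul_right, map_inv₀]
    set a := (starRingEnd ℂ) ⟪Φfr, Sp ε Φfr⟫ with ha'
    set b := (⟪Φfr, Sm ε Φfr⟫ : ℂ) with hb'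
    set X := (⟪Sp ε Φfr, Sm ε Φfr⟫ : ℂ) with hX'
    have ha : a ≠ 0 := hconj ε hε
    have hb : b ≠ 0 := hcm ε hε
    field_simp
  have keyB : ∀ (B : ℋ →L[ℂ] ℋ) (ε : ℝ), 0 < ε →
      ⟪Sp ε Φfr, B (Sm ε Φfr)⟫
        = (starRingEnd ℂ) ⟪Φfr, Sp ε Φfr⟫ * ⟪Φfr, Sm ε Φfr⟫ *
          ⟪(⟪Φfr, Sp ε Φfr⟫)⁻¹ • (Sp ε Φfr), B ((⟪Φfr, Sm ε Φfr⟫)⁻¹ • (Sm ε Φfr))⟫ := by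
    intro B ε hε
    simp only [map_smul, inner_smul_left, inner_smul_right, map_inv₀]
    set a := (starRingEnd ℂ) ⟪Φfr, Sp ε Φfr⟫ with ha'
    set b := (⟪Φfr, Sm ε Φfr⟫ : ℂ) with hb'
    set X := (⟪Sp ε Φfr, B (Sm ε Φfr)⟫ : ℂ) with hX'
    have ha : a ≠ 0 := hconj ε hε
    have hb : b ≠ 0 := hcm ε hε
    field_simp
  have hOmega : ∀ᶠ ε in 𝓝[>] (0 : ℝ), (0 : ℝ) < ε :=
    eventually_mem_nhdsWithin.mono (fun ε hε => hε)
  constructor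
  · filter_upwards [hFne, hOmega] with ε hFε hε
    rw [key ε hε]
    exact mul_ne_zero (mul_ne_zero (hconj ε hε) (hcm ε hε)) hFε
  · intro B
    set G : ℝ → ℂ := fun ε =>
      ⟪(⟪Φfr, Sp ε Φfr⟫)⁻¹ • (Sp ε Φfr), B ((⟪Φfr, Sm ε Φfr⟫)⁻¹ • (Sm ε Φfr))⟫ with hG
    have hGt : Tendsto G (𝓝[>] (0 : ℝ)) (𝓝 ⟪ΦGLp, B ΦGLm⟫) :=
      hlimp.inner ((B.continuous.tendsto _).comp hlimm)
    have hdiv : Tendsto (fun ε => G ε / F ε) (𝓝[>] (0 : ℝ))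
        (𝓝 (⟪ΦGLp, B ΦGLm⟫ / ⟪ΦGLp, ΦGLm⟫)) := hGt.div hFt hinner0
    have hval : ⟪ΦGLp, B ΦGLm⟫ / ⟪ΦGLp, ΦGLm⟫ = ⟪ΦGLp, B ΦGLp⟫ := by
      rw [hinner, hm, map_smul, inner_smul_right]
      field_simp
    rw [← hval]
    refine hdiv.congr' ?_
    filter_upwards [hFne, hOmega] with ε hFε hε
    have hab : (starRingEnd ℂ) ⟪Φfr, Sp ε Φfr⟫ * ⟪Φfr, Sm ε Φfr⟫ ≠ 0 :=
      mul_ne_zero (hconj ε hε) (hcm ε hε)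
    rw [key ε hε, keyB B ε hε, mul_div_mul_left _ _ hab]
end

section
/- Let ℋ be a complex Hilbert space, H_fr and V bounded self-adjoint operators on ℋ, and fix λ > 0; put H := H_fr + λV. Let Φ_fr ∈ ℋ be a unit vector with H_frΦ_fr = E_frΦ_fr, E_fr ∈ ℝ. For each ε > 0 let λ ↦ S_ε⁺(λ) and λ ↦ S_ε⁻(λ) be families of unitary operators, differentiable in operator norm in λ on a neighborhood of the fixed λ, satisfying −iελ ∂_λS_ε⁺ = (H_fr + λV) S_ε⁺ − S_ε⁺ H_fr and iελ ∂_λS_ε⁻ = (H_fr + λV) S_ε⁻ − S_ε⁻ H_fr. Assume c_ε^± := ⟨Φ_fr, S_ε^±Φ_fr⟩ ≠ 0, that Φ_ε^± := S_ε^±Φ_fr/c_ε^± converge as ε ↓ 0 to vectors Φ_GL^± with Φ := Φ_GL⁺ a unit vector and Φ_GL⁺ = e^{iα}Φ_GL⁻ for some α ∈ ℝ, and that c_ε := ⟨Φ_fr, (S_ε⁺)*S_ε⁻Φ_fr⟩ ≠ 0 for λ in that neighborhood. Set E := ⟨Φ, HΦ⟩. Then Sucher's formula holds: E − E_fr = lim_{ε↓0}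 (iελ/2) · (∂_λ c_ε)/c_ε, all quantities being evaluated at the fixed λ. -/
open Topology Filter

local notation "⟪" x ", " y "⟫" => @inner ℂ _ _ x y

/-- Sucher's formula for the energy shift in the Gell-Mann–Low adiabatic switching
scheme. -/
theorem stmt_4
    {ℋ : Type*} [NormedAddCommGroup ℋ] [InnerProductSpace ℂ ℋ] [CompleteSpace ℋ]
    (Hfr V : ℋ →L[ℂ] ℋ) (hHfr : IsSelfAdjoint Hfr) (hV : IsSelfAdjoint V)
    (lam : ℝ) (hlam : 0 < lam)
    (Φfr : ℋ) (hΦfr : ‖Φfr‖ = 1)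
    (Efr : ℝ) (hEfr : Hfr Φfr = (Efr : ℂ) • Φfr)
    (Sp Sm Sp' Sm' : ℝ → ℝ → ℋ →L[ℂ] ℋ)
    (Unb : Set ℝ) (hUnb : Unb ∈ 𝓝 lam)
    (hSpU : ∀ ε : ℝ, 0 < ε → ∀ l ∈ Unb, Sp ε l ∈ unitary (ℋ →L[ℂ] ℋ))
    (hSmU : ∀ ε : ℝ, 0 < ε → ∀ l ∈ Unb, Sm ε l ∈ unitary (ℋ →L[ℂ] ℋ))
    (hSp : ∀ ε : ℝ, 0 < ε → ∀ l ∈ Unb, HasDerivAt (Sp ε) (Sp' ε l) l)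
    (hSm : ∀ ε : ℝ, 0 < ε → ∀ l ∈ Unb, HasDerivAt (Sm ε) (Sm' ε l) l)
    (hODEp : ∀ ε : ℝ, 0 < ε → ∀ l ∈ Unb,
      (-(Complex.I * (ε : ℂ) * (l : ℂ))) • Sp' ε l
        = (Hfr + (l : ℂ) • V) ∘L Sp ε l - Sp ε l ∘L Hfr)
    (hODEm : ∀ ε : ℝ, 0 < ε → ∀ l ∈ Unb,
      (Complex.I * (ε : ℂ) * (l : ℂ)) • Sm' ε l
        = (Hfr + (l : ℂ) • V) ∘L Sm ε l - Sm ε l ∘L Hfr)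
    (hcp : ∀ ε : ℝ, 0 < ε → ⟪Φfr, Sp ε lam Φfr⟫ ≠ 0)
    (hcm : ∀ ε : ℝ, 0 < ε → ⟪Φfr, Sm ε lam Φfr⟫ ≠ 0)
    (ΦGLp ΦGLm : ℋ)
    (hlimp : Tendsto (fun ε => (⟪Φfr, Sp ε lam Φfr⟫)⁻¹ • (Sp ε lam Φfr))
      (𝓝[>] (0 : ℝ)) (𝓝 ΦGLp))
    (hlimm : Tendsto (fun ε => (⟪Φfr, Sm ε lam Φfr⟫)⁻¹ • (Sm ε lam Φfr))
      (𝓝[>] (0 : ℝ)) (𝓝 ΦGLm))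
    (hunit : ‖ΦGLp‖ = 1)
    (α : ℝ) (hphase : ΦGLp = Complex.exp (Complex.I * (α : ℂ)) • ΦGLm)
    (hcne : ∀ ε : ℝ, 0 < ε → ∀ l ∈ Unb,
      ⟪Φfr, ((ContinuousLinearMap.adjoint (Sp ε l)) ∘L Sm ε l) Φfr⟫ ≠ 0) :
    Tendsto (fun ε : ℝ =>
        (Complex.I * (ε : ℂ) * (lam : ℂ) / 2)
          * deriv (fun l => ⟪Φfr, ((ContinuousLinearMap.adjoint (Sp ε l)) ∘L Sm ε l) Φfr⟫) lam
          / ⟪Φfr, ((ContinuousLinearMap.adjoint (Sp ε lam)) ∘L Sm ε lam) Φfr⟫)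
      (𝓝[>] (0 : ℝ))
      (𝓝 (⟪ΦGLp, (Hfr + (lam : ℂ) • V) ΦGLp⟫ - (Efr : ℂ))) := by
  classical
  have hlmem : lam ∈ Unb := mem_of_mem_nhds hUnb
  set H : ℋ →L[ℂ] ℋ := Hfr + (lam : ℂ) • V with hHdef
  have swap : ∀ A : ℋ →L[ℂ] ℋ, ContinuousLinearMap.adjoint A = A →
      ∀ x y : ℋ, ⟪A x, y⟫ = ⟪x, A y⟫ := by
    intro A hA x y
    conv_lhs => rw [← hA]
    exact ContinuousLinearMap.adjoint_inner_left A y x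
  have hfrswap := swap Hfr (ContinuousLinearMap.isSelfAdjoint_iff'.mp hHfr)
  have hvswap := swap V (ContinuousLinearMap.isSelfAdjoint_iff'.mp hV)
  have hH_inner : ∀ x y : ℋ, ⟪H x, y⟫ = ⟪x, H y⟫ := by
    intro x y
    simp only [hHdef, ContinuousLinearMap.add_apply, ContinuousLinearMap.smul_apply,
      inner_add_left, inner_add_right, inner_smul_left, inner_smul_right,
      Complex.conj_ofReal, hfrswap x y, hvswap x y]
  set Φp : ℝ → ℋ := fun ε => (⟪Φfr, Sp ε lam Φfr⟫)⁻¹ • (Sp ε lam Φfr) with hΦp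
  set Φm : ℝ → ℋ := fun ε => (⟪Φfr, Sm ε lam Φfr⟫)⁻¹ • (Sm ε lam Φfr) with hΦm
  -- Step 1: pointwise identity for each ε > 0
  have key : ∀ ε : ℝ, 0 < ε →
      (Complex.I * (ε : ℂ) * (lam : ℂ) / 2)
          * deriv (fun l => ⟪Φfr, ((ContinuousLinearMap.adjoint (Sp ε l)) ∘L Sm ε l) Φfr⟫) lam
          / ⟪Φfr, ((ContinuousLinearMap.adjoint (Sp ε lam)) ∘L Sm ε lam) Φfr⟫
        = ⟪Φp ε, H (Φm ε)⟫ / ⟪Φp ε, Φm ε⟫ - (Efr : ℂ) := by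
    intro ε hε
    have hrw : ∀ l : ℝ, ⟪Φfr, ((ContinuousLinearMap.adjoint (Sp ε l)) ∘L Sm ε l) Φfr⟫
        = ⟪Sp ε l Φfr, Sm ε l Φfr⟫ := by
      intro l
      rw [ContinuousLinearMap.comp_apply, ContinuousLinearMap.adjoint_inner_right]
    set a := Sp ε lam Φfr with ha
    set b := Sm ε lam Φfr with hb
    set a' := Sp' ε lam Φfr with ha'
    set b' := Sm' ε lam Φfr with hb'
    set c := ⟪a, b⟫ with hcdef
    have hc : c ≠ 0 := by
      have := hcne ε hε lam hlmem
      rwa [hrw lam] at this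
    -- derivative of the vector-valued maps
    have hda : HasDerivAt (fun l => Sp ε l Φfr) a' lam := by
      have h :=
        ((ContinuousLinearMap.apply ℂ ℋ Φfr).restrictScalars ℝ).hasFDerivAt.comp_hasDerivAt lam
          (hSp ε hε lam hlmem)
      exact h
    have hdb : HasDerivAt (fun l => Sm ε l Φfr) b' lam := by
      have h :=
        ((ContinuousLinearMap.apply ℂ ℋ Φfr).restrictScalars ℝ).hasFDerivAt.comp_hasDerivAt lam
          (hSm ε hε lam hlmem)
      exact h
    have hd : HasDerivAt (fun l => ⟪Sp ε l Φfr, Sm ε l Φfr⟫) (⟪a, b'⟫ + ⟪a', b⟫) lam :=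
      hda.inner ℂ hdb
    have hderiv :
        deriv (fun l => ⟪Φfr, ((ContinuousLinearMap.adjoint (Sp ε l)) ∘L Sm ε l) Φfr⟫) lam
          = ⟪a, b'⟫ + ⟪a', b⟫ := by
      have : (fun l => ⟪Φfr, ((ContinuousLinearMap.adjoint (Sp ε l)) ∘L Sm ε l) Φfr⟫)
          = fun l => ⟪Sp ε l Φfr, Sm ε l Φfr⟫ := funext hrw
      rw [this, hd.deriv]
    -- operator ODEs applied to Φfr
    have hm : (Complex.I * (ε : ℂ) * (lam : ℂ)) • b' = H b - (Efr : ℂ) • b := by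
      have h := congrArg (fun T : ℋ →L[ℂ] ℋ => T Φfr) (hODEm ε hε lam hlmem)
      rw [hHdef]
      simpa [ContinuousLinearMap.smul_apply, ContinuousLinearMap.sub_apply,
        ContinuousLinearMap.comp_apply, hEfr, map_smul, ← ha, ← hb, ← hb'] using h
    have hp : (-(Complex.I * (ε : ℂ) * (lam : ℂ))) • a' = H a - (Efr : ℂ) • a := by
      have h := congrArg (fun T : ℋ →L[ℂ] ℋ => T Φfr) (hODEp ε hε lam hlmem)
      rw [hHdef]
      simpa [ContinuousLinearMap.smul_apply, ContinuousLinearMap.sub_apply,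
        ContinuousLinearMap.comp_apply, hEfr, map_smul, ← ha, ← ha'] using h
    have h1 : Complex.I * (ε : ℂ) * (lam : ℂ) * ⟪a, b'⟫ = ⟪a, H b⟫ - (Efr : ℂ) * c := by
      calc Complex.I * (ε : ℂ) * (lam : ℂ) * ⟪a, b'⟫
          = ⟪a, (Complex.I * (ε : ℂ) * (lam : ℂ)) • b'⟫ := (inner_smul_right _ _ _).symm
        _ = ⟪a, H b - (Efr : ℂ) • b⟫ := by rw [hm]
        _ = ⟪a, H b⟫ - (Efr : ℂ) * ⟪a, b⟫ := by rw [inner_sub_right, inner_smul_right]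
        _ = ⟪a, H b⟫ - (Efr : ℂ) * c := by rw [← hcdef]
    have hconj : (starRingEnd ℂ) (-(Complex.I * (ε : ℂ) * (lam : ℂ)))
        = Complex.I * (ε : ℂ) * (lam : ℂ) := by
      simp [Complex.conj_ofReal]
    have h2 : Complex.I * (ε : ℂ) * (lam : ℂ) * ⟪a', b⟫ = ⟪a, H b⟫ - (Efr : ℂ) * c := by
      calc Complex.I * (ε : ℂ) * (lam : ℂ) * ⟪a', b⟫
          = ⟪(-(Complex.I * (ε : ℂ) * (lam : ℂ))) • a', b⟫ := by
            rw [inner_smul_left, hconj]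
        _ = ⟪H a - (Efr : ℂ) • a, b⟫ := by rw [hp]
        _ = ⟪H a, b⟫ - (starRingEnd ℂ) ((Efr : ℂ)) * ⟪a, b⟫ := by
            rw [inner_sub_left, inner_smul_left]
        _ = ⟪a, H b⟫ - (Efr : ℂ) * c := by rw [hH_inner a b, Complex.conj_ofReal, ← hcdef]
    have hsum : Complex.I * (ε : ℂ) * (lam : ℂ) * (⟪a, b'⟫ + ⟪a', b⟫)
        = 2 * (⟪a, H b⟫ - (Efr : ℂ) * c) := by
      rw [mul_add, h1, h2]; ring
    rw [hderiv, hrw lam, ← ha, ← hb, ← hcdef]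
    have hhalf : Complex.I * (ε : ℂ) * (lam : ℂ) / 2 * (⟪a, b'⟫ + ⟪a', b⟫)
        = ⟪a, H b⟫ - (Efr : ℂ) * c := by
      rw [div_mul_eq_mul_div, hsum]; ring
    rw [hhalf, sub_div, mul_div_assoc, div_self hc, mul_one]
    -- now N / c = ⟪Φp ε, H (Φm ε)⟫ / ⟪Φp ε, Φm ε⟫
    have hcp' := hcp ε hε
    have hcm' := hcm ε hε
    set q : ℂ := (starRingEnd ℂ) ((⟪Φfr, a⟫)⁻¹) * (⟪Φfr, b⟫)⁻¹ with hq
    have hq0 : q ≠ 0 := by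
      simp only [hq, mul_ne_zero_iff, ne_eq, map_eq_zero, inv_eq_zero]
      exact ⟨hcp', hcm'⟩
    have hnum : ⟪Φp ε, H (Φm ε)⟫ = q * ⟪a, H b⟫ := by
      show ⟪(⟪Φfr, a⟫)⁻¹ • a, H ((⟪Φfr, b⟫)⁻¹ • b)⟫ = q * ⟪a, H b⟫
      rw [map_smul, inner_smul_left, inner_smul_right, hq]
      ring
    have hden : ⟪Φp ε, Φm ε⟫ = q * c := by
      show ⟪(⟪Φfr, a⟫)⁻¹ • a, (⟪Φfr, b⟫)⁻¹ • b⟫ = q * c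
      rw [inner_smul_left, inner_smul_right, hq, hcdef]
      ring
    rw [hnum, hden, mul_div_mul_left _ _ hq0]
  -- Step 2: pass to the limit
  have heq : ∀ᶠ (ε : ℝ) in 𝓝[>] (0 : ℝ),
      (Complex.I * (ε : ℂ) * (lam : ℂ) / 2)
          * deriv (fun l => ⟪Φfr, ((ContinuousLinearMap.adjoint (Sp ε l)) ∘L Sm ε l) Φfr⟫) lam
          / ⟪Φfr, ((ContinuousLinearMap.adjoint (Sp ε lam)) ∘L Sm ε lam) Φfr⟫
        = ⟪Φp ε, H (Φm ε)⟫ / ⟪Φp ε, Φm ε⟫ - (Efr : ℂ) := by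
    filter_upwards [self_mem_nhdsWithin] with ε hε
    exact key ε hε
  set e : ℂ := Complex.exp (Complex.I * (α : ℂ)) with he
  have he0 : e ≠ 0 := Complex.exp_ne_zero _
  have hGLm : ΦGLm = e⁻¹ • ΦGLp := by
    rw [hphase, smul_smul, inv_mul_cancel₀ he0, one_smul]
  have hip : ⟪ΦGLp, ΦGLp⟫ = 1 := by
    rw [@inner_self_eq_norm_sq_to_K ℂ, hunit]
    norm_num
  have hnumlim : Tendsto (fun ε => ⟪Φp ε, H (Φm ε)⟫) (𝓝[>] (0 : ℝ)) (𝓝 ⟪ΦGLp, H ΦGLm⟫) :=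
    hlimp.inner ((H.continuous.tendsto _).comp hlimm)
  have hdenlim : Tendsto (fun ε => ⟪Φp ε, Φm ε⟫) (𝓝[>] (0 : ℝ)) (𝓝 ⟪ΦGLp, ΦGLm⟫) :=
    hlimp.inner hlimm
  have hdenval : ⟪ΦGLp, ΦGLm⟫ = e⁻¹ := by
    rw [hGLm, inner_smul_right, hip, mul_one]
  have hnumval : ⟪ΦGLp, H ΦGLm⟫ = e⁻¹ * ⟪ΦGLp, H ΦGLp⟫ := by
    rw [hGLm, map_smul, inner_smul_right]
  have hfin : ⟪ΦGLp, H ΦGLm⟫ / ⟪ΦGLp, ΦGLm⟫ = ⟪ΦGLp, H ΦGLp⟫ := by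
    rw [hnumval, hdenval, mul_div_assoc]
    field_simp
  have hlim : Tendsto (fun ε => ⟪Φp ε, H (Φm ε)⟫ / ⟪Φp ε, Φm ε⟫ - (Efr : ℂ))
      (𝓝[>] (0 : ℝ)) (𝓝 (⟪ΦGLp, H ΦGLp⟫ - (Efr : ℂ))) := by
    have hdne : ⟪ΦGLp, ΦGLm⟫ ≠ 0 := by rw [hdenval]; exact inv_ne_zero he0
    have := (hnumlim.div hdenlim hdne).sub (tendsto_const_nhds (x := (Efr : ℂ)))
    rwa [hfin] at this
  exact Tendsto.congr' (heq.mono fun _ h => h.symm) hlim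
end

section
/- Let ℋ be a complex Hilbert space, H_fr and V bounded self-adjoint operators on ℋ, σ ∈ {1,−1}, and fix λ > 0; put H := H_fr + λV. Let Φ_fr be a unit vector with H_frΦ_fr = E_frΦ_fr, E_fr ∈ ℝ. For each ε > 0 let λ ↦ S_ε(λ) be a family of unitary operators, differentiable in operator norm on a neighborhood of the fixed λ, satisfying σ iελ ∂_λS_ε = (H_fr + λV) S_ε − S_ε H_fr, and assume c_ε(λ) := ⟨Φ_fr, S_ε(λ)Φ_fr⟩ ≠ 0 on that neighborhood; set E_ε := ⟨Φ_fr, H S_εΦ_fr⟩/c_ε and T_ε := (|c_ε|/c_ε) S_ε. Assume that at the fixed λ: (i) there is a bounded operator S_GL with ⟨φ, T_εψ⟩ → ⟨φ, S_GLψ⟩ for all φ, ψ ∈ ℋ as ε ↓ 0; (ii) ⟨φ, ελ(∂_λT_ε)ψ⟩ → 0 for all φ, ψ ∈ ℋ; (iii) E_ε → E for some E ∈ ℂ. Then the Gell-Mann–Low Møller operator S_GL satisfies the intertwining relation S_GL (H_fr − E_fr) = (H − Re E) S_GL. -/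
open Topology Filter

local notation "⟪" x ", " y "⟫" => @inner ℂ _ _ x y

private lemma scalar_key (cl c' a g' κ Eε Efr R : ℂ) (hc : cl ≠ 0) (ha : a ≠ 0)
    (haa : a * a = cl * (starRingEnd ℂ) cl)
    (hg : 2 * a * g' = c' * (starRingEnd ℂ) cl + (starRingEnd ℂ) c' * cl)
    (hkey : κ * c' = (Eε - Efr) * cl)
    (hkeyc : -(κ * (starRingEnd ℂ) c') = ((starRingEnd ℂ) Eε - Efr) * (starRingEnd ℂ) cl)
    (hR : 2 * R = Eε + (starRingEnd ℂ) Eε) :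
    κ * ((g' * cl - a * c') / cl ^ 2) = (Efr - R) * (a / cl) := by
  have h3 : 2 * a * (κ * g') = (Eε - (starRingEnd ℂ) Eε) * (cl * (starRingEnd ℂ) cl) := by
    linear_combination κ * hg + (starRingEnd ℂ) cl * hkey - cl * hkeyc
  rw [← haa] at h3
  have h2a : (2 : ℂ) * a ≠ 0 := mul_ne_zero two_ne_zero ha
  apply mul_left_cancel₀ h2a
  rw [show (2:ℂ) * a * (κ * ((g' * cl - a * c') / cl ^ 2))
      = (2 * a * (κ * g') * cl - 2 * a ^ 2 * (κ * c')) / cl ^ 2 by ring,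
    div_eq_iff (pow_ne_zero 2 hc)]
  have hinv : cl * cl⁻¹ = 1 := mul_inv_cancel₀ hc
  linear_combination cl * h3 - 2 * a ^ 2 * hkey + a ^ 2 * cl * hR - 2 * a ^ 2 * (Efr - R) * cl * hinv

/-- The Gell-Mann–Low Møller operator intertwines the free and the interacting
Hamiltonians (up to the energy shift). -/
theorem stmt_5
    {ℋ : Type*} [NormedAddCommGroup ℋ] [InnerProductSpace ℂ ℋ] [CompleteSpace ℋ]
    (Hfr V : ℋ →L[ℂ] ℋ) (hHfr : IsSelfAdjoint Hfr) (hV : IsSelfAdjoint V)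
    (σ : ℝ) (hσ : σ = 1 ∨ σ = -1)
    (lam : ℝ) (hlam : 0 < lam)
    (Φfr : ℋ) (hΦfr : ‖Φfr‖ = 1)
    (Efr : ℝ) (hEfr : Hfr Φfr = (Efr : ℂ) • Φfr)
    (S S' : ℝ → ℝ → ℋ →L[ℂ] ℋ)
    (Unb : Set ℝ) (hUnb : Unb ∈ 𝓝 lam)
    (hSU : ∀ ε : ℝ, 0 < ε → ∀ l ∈ Unb, S ε l ∈ unitary (ℋ →L[ℂ] ℋ))
    (hS : ∀ ε : ℝ, 0 < ε → ∀ l ∈ Unb, HasDerivAt (S ε) (S' ε l) l)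
    (hODE : ∀ ε : ℝ, 0 < ε → ∀ l ∈ Unb,
      ((σ : ℂ) * Complex.I * (ε : ℂ) * (l : ℂ)) • S' ε l
        = (Hfr + (l : ℂ) • V) ∘L S ε l - S ε l ∘L Hfr)
    (c : ℝ → ℝ → ℂ) (hc : ∀ ε l : ℝ, c ε l = ⟪Φfr, S ε l Φfr⟫)
    (hc0 : ∀ ε : ℝ, 0 < ε → ∀ l ∈ Unb, c ε l ≠ 0)
    (Eps : ℝ → ℂ)
    (hEps : ∀ ε : ℝ, 0 < ε →
      Eps ε = ⟪Φfr, (Hfr + (lam : ℂ) • V) (S ε lam Φfr)⟫ / c ε lam)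
    (T : ℝ → ℝ → ℋ →L[ℂ] ℋ)
    (hT : ∀ ε l : ℝ, T ε l = (((‖c ε l‖ : ℝ) : ℂ) / c ε l) • S ε l)
    (SGL : ℋ →L[ℂ] ℋ)
    (hweak : ∀ φ ψ : ℋ,
      Tendsto (fun ε => ⟪φ, (T ε lam) ψ⟫) (𝓝[>] (0 : ℝ)) (𝓝 ⟪φ, SGL ψ⟫))
    (hweak' : ∀ φ ψ : ℋ,
      Tendsto (fun ε : ℝ => ⟪φ, (((ε * lam : ℝ) : ℂ) • deriv (fun l => T ε l) lam) ψ⟫)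
        (𝓝[>] (0 : ℝ)) (𝓝 0))
    (E : ℂ) (hE : Tendsto Eps (𝓝[>] (0 : ℝ)) (𝓝 E)) :
    SGL ∘L (Hfr - (Efr : ℂ) • (1 : ℋ →L[ℂ] ℋ))
      = (Hfr + (lam : ℂ) • V - ((E.re : ℝ) : ℂ) • (1 : ℋ →L[ℂ] ℋ)) ∘L SGL := by
  have hlamU : lam ∈ Unb := mem_of_mem_nhds hUnb
  set H : ℋ →L[ℂ] ℋ := Hfr + (lam : ℂ) • V with hHdef
  have hH : IsSelfAdjoint H :=
    hHfr.add (IsSelfAdjoint.smul (show star ((lam:ℝ):ℂ) = _ from Complex.conj_ofReal lam) hV)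
  have hHsym := hH.isSymmetric
  have hHfrsym := hHfr.isSymmetric
  -- the key pointwise identity
  have key : ∀ ε : ℝ, 0 < ε →
      ((σ : ℂ) * Complex.I * (ε : ℂ) * (lam : ℂ)) • deriv (fun l => T ε l) lam
        = ((Efr : ℂ) - (((Eps ε).re : ℝ) : ℂ)) • T ε lam
          + (H ∘L T ε lam - T ε lam ∘L Hfr) := by
    intro ε hε
    set κ : ℂ := (σ : ℂ) * Complex.I * (ε : ℂ) * (lam : ℂ) with hκdef
    have hσ0 : (σ : ℂ) ≠ 0 := by rcases hσ with h | h <;> simp [h]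
    have hκ0 : κ ≠ 0 :=
      mul_ne_zero (mul_ne_zero (mul_ne_zero hσ0 Complex.I_ne_zero)
        (by exact_mod_cast hε.ne')) (by exact_mod_cast hlam.ne')
    have hcne : c ε lam ≠ 0 := hc0 ε hε lam hlamU
    set cl : ℂ := c ε lam with hcl
    set c' : ℂ := ⟪Φfr, S' ε lam Φfr⟫ with hc'
    set a : ℝ := ‖cl‖ with hadef
    have ha0 : a ≠ 0 := norm_ne_zero_iff.mpr hcne
    have haC : (a : ℂ) ≠ 0 := by exact_mod_cast ha0
    -- derivative of c
    have h1 : HasDerivAt (S ε) (S' ε lam) lam := hS ε hε lam hlamU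
    have happ : HasDerivAt (fun l => S ε l Φfr) (S' ε lam Φfr) lam :=
      (((ContinuousLinearMap.apply ℂ ℋ Φfr).restrictScalars ℝ).hasFDerivAt).comp_hasDerivAt lam h1
    have hcder : HasDerivAt (fun l => c ε l) c' lam := by
      have h2 := (((innerSL ℂ Φfr).restrictScalars ℝ).hasFDerivAt).comp_hasDerivAt lam happ
      simpa [hc, Function.comp_def, hc'] using h2
    -- key scalar ODE identity
    have key1 : κ * c' = (Eps ε - (Efr : ℂ)) * cl := by
      have h3 := congrArg (fun (A : ℋ →L[ℂ] ℋ) => ⟪Φfr, A Φfr⟫) (hODE ε hε lam hlamU)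
      simp only [ContinuousLinearMap.smul_apply, ContinuousLinearMap.sub_apply,
        ContinuousLinearMap.comp_apply, inner_smul_right, inner_sub_right] at h3
      have hE1 : ⟪Φfr, H (S ε lam Φfr)⟫ = Eps ε * cl := by
        rw [hEps ε hε, ← hcl, div_mul_cancel₀ _ hcne]
      have hE2 : ⟪Φfr, S ε lam (Hfr Φfr)⟫ = (Efr : ℂ) * cl := by
        rw [hEfr, map_smul, inner_smul_right, ← hc, ← hcl]
      rw [← hHdef] at h3
      rw [hE1, hE2, ← hc', ← hκdef] at h3
      linear_combination h3
    have hkeyc : -(κ * (starRingEnd ℂ) c')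
        = ((starRingEnd ℂ) (Eps ε) - (Efr : ℂ)) * (starRingEnd ℂ) cl := by
      have := congrArg (starRingEnd ℂ) key1
      simp only [map_mul, map_sub, Complex.conj_ofReal, hκdef, Complex.conj_I] at this ⊢
      linear_combination this
    -- derivative of |c|
    have hnorm : HasDerivAt (fun l => Complex.normSq (c ε l))
        (2 * ((starRingEnd ℂ) cl * c').re) lam := by
      have hre : HasDerivAt (fun l => (c ε l).re) c'.re lam :=
        (Complex.reCLM.hasFDerivAt).comp_hasDerivAt lam hcder
      have him : HasDerivAt (fun l => (c ε l).im) c'.im lam :=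
        (Complex.imCLM.hasFDerivAt).comp_hasDerivAt lam hcder
      have h4 := (hre.mul hre).add (him.mul him)
      have hfun : (fun l => Complex.normSq (c ε l))
          = fun l => (c ε l).re * (c ε l).re + (c ε l).im * (c ε l).im := by
        funext l; exact Complex.normSq_apply _
      rw [hfun]
      refine h4.congr_deriv ?_
      simp [Complex.mul_re, Complex.conj_re, Complex.conj_im, hcl]
      ring
    have hn0 : Complex.normSq cl ≠ 0 := by simpa [Complex.normSq_eq_zero] using hcne
    have habs : HasDerivAt (fun l => ‖c ε l‖)
        (((starRingEnd ℂ) cl * c').re / a) lam := by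
      have h5 := (Real.hasDerivAt_sqrt hn0).comp lam hnorm
      have hfun : (fun l => ‖c ε l‖) = fun l => Real.sqrt (Complex.normSq (c ε l)) := by
        funext l; rw [Complex.norm_def]
      rw [hfun]
      refine h5.congr_deriv ?_
      rw [show Real.sqrt (Complex.normSq cl) = a by rw [hadef, Complex.norm_def]]
      field_simp
    set g' : ℝ := ((starRingEnd ℂ) cl * c').re / a with hg'def
    have hgC : HasDerivAt (fun l => ((‖c ε l‖ : ℝ) : ℂ)) ((g' : ℝ) : ℂ) lam :=
      (Complex.ofRealCLM.hasFDerivAt).comp_hasDerivAt lam habs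
    have hfder : HasDerivAt (fun l => ((‖c ε l‖ : ℝ) : ℂ) / c ε l)
        (((g' : ℂ) * cl - (a : ℂ) * c') / cl ^ 2) lam := hgC.div hcder hcne
    have hTder : HasDerivAt (fun l => T ε l)
        ((((g' : ℂ) * cl - (a : ℂ) * c') / cl ^ 2) • S ε lam
          + (((a : ℂ) / cl) • S' ε lam)) lam := by
      have hfun : (fun l => T ε l)
          = fun l => (((‖c ε l‖ : ℝ) : ℂ) / c ε l) • S ε l := by
        funext l; exact hT ε l
      rw [hfun]
      have := hfder.smul h1
      refine this.congr_deriv ?_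
      rw [hcl, hadef]
      abel
    rw [hTder.deriv]
    -- scalar identity
    have hg : 2 * (a : ℂ) * (g' : ℂ) = c' * (starRingEnd ℂ) cl + (starRingEnd ℂ) c' * cl := by
      have h6 := Complex.add_conj ((starRingEnd ℂ) cl * c')
      have h7 : (g' : ℂ) * (a : ℂ) = (((starRingEnd ℂ) cl * c').re : ℂ) := by
        rw [hg'def]; push_cast; field_simp
      simp only [map_mul, Complex.conj_conj] at h6
      push_cast at h6
      linear_combination 2 * h7 - h6
    have haa : (a : ℂ) * (a : ℂ) = cl * (starRingEnd ℂ) cl := by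
      rw [Complex.mul_conj]
      norm_cast
      rw [hadef, ← Complex.sq_norm]
      ring
    have hR : 2 * (((Eps ε).re : ℝ) : ℂ) = Eps ε + (starRingEnd ℂ) (Eps ε) := by
      have h8 := Complex.add_conj (Eps ε)
      push_cast at h8
      linear_combination -h8
    have hscal := scalar_key cl c' (a : ℂ) (g' : ℂ) κ (Eps ε) (Efr : ℂ)
      (((Eps ε).re : ℝ) : ℂ) hcne haC haa hg key1 hkeyc hR
    -- assemble operators
    have hODElam := hODE ε hε lam hlamU
    rw [← hHdef] at hODElam
    rw [smul_add, smul_smul, hscal, smul_comm κ ((a : ℂ) / cl), hODElam]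
    rw [hT ε lam, ← hcl, ← hadef]
    rw [smul_sub, ContinuousLinearMap.comp_smul, ContinuousLinearMap.smul_comp]
    module
  -- now the weak limit argument
  have main : ∀ φ ψ : ℋ, ⟪φ, SGL ((Hfr - (Efr : ℂ) • (1 : ℋ →L[ℂ] ℋ)) ψ)⟫
      = ⟪φ, (H - ((E.re : ℝ) : ℂ) • (1 : ℋ →L[ℂ] ℋ)) (SGL ψ)⟫ := by
    intro φ ψ
    have l1 : Tendsto (fun ε : ℝ => (σ : ℂ) * Complex.I
        * ⟪φ, (((ε * lam : ℝ) : ℂ) • deriv (fun l => T ε l) lam) ψ⟫) (𝓝[>] (0:ℝ)) (𝓝 0) := by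
      simpa using (hweak' φ ψ).const_mul ((σ : ℂ) * Complex.I)
    have l2 : ∀ᶠ ε in 𝓝[>] (0:ℝ), (σ : ℂ) * Complex.I
        * ⟪φ, (((ε * lam : ℝ) : ℂ) • deriv (fun l => T ε l) lam) ψ⟫
        = ((Efr : ℂ) - (((Eps ε).re : ℝ) : ℂ)) * ⟪φ, T ε lam ψ⟫
          + (⟪H φ, T ε lam ψ⟫ - ⟪φ, T ε lam (Hfr ψ)⟫) := by
      filter_upwards [self_mem_nhdsWithin] with ε hε
      have hk := key ε hε
      have e1 : (σ : ℂ) * Complex.I * ⟪φ, (((ε * lam : ℝ) : ℂ) • deriv (fun l => T ε l) lam) ψ⟫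
          = ⟪φ, ((((σ : ℂ) * Complex.I * (ε : ℂ) * (lam : ℂ)) • deriv (fun l => T ε l) lam)) ψ⟫ := by
        simp only [ContinuousLinearMap.smul_apply, inner_smul_right]
        push_cast
        ring
      rw [e1, hk]
      simp only [ContinuousLinearMap.add_apply, ContinuousLinearMap.sub_apply,
        ContinuousLinearMap.smul_apply, ContinuousLinearMap.comp_apply,
        inner_add_right, inner_sub_right, inner_smul_right]
      have hs := hHsym φ ((T ε lam) ψ)
      simp only [ContinuousLinearMap.coe_coe] at hs
      rw [← hs]
    have l3 : Tendsto (fun ε : ℝ => ((Efr : ℂ) - (((Eps ε).re : ℝ) : ℂ)) * ⟪φ, T ε lam ψ⟫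
          + (⟪H φ, T ε lam ψ⟫ - ⟪φ, T ε lam (Hfr ψ)⟫)) (𝓝[>] (0:ℝ))
        (𝓝 (((Efr : ℂ) - ((E.re : ℝ) : ℂ)) * ⟪φ, SGL ψ⟫
          + (⟪H φ, SGL ψ⟫ - ⟪φ, SGL (Hfr ψ)⟫))) := by
      refine Tendsto.add (Tendsto.mul (Tendsto.sub tendsto_const_nhds ?_) (hweak φ ψ))
        ((hweak (H φ) ψ).sub (hweak φ (Hfr ψ)))
      exact (Complex.continuous_ofReal.tendsto _).comp ((Complex.continuous_re.tendsto _).comp hE)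
    have heq := tendsto_nhds_unique (l1.congr' l2) l3
    have hsym2 := hHsym φ (SGL ψ)
    simp only [ContinuousLinearMap.coe_coe] at hsym2
    simp only [ContinuousLinearMap.sub_apply, ContinuousLinearMap.smul_apply,
      ContinuousLinearMap.one_apply, map_sub, map_smul, inner_sub_right, inner_smul_right]
    linear_combination heq + hsym2
  ext ψ
  refine ext_inner_left ℂ fun φ => ?_
  simpa only [ContinuousLinearMap.comp_apply] using main φ ψ
end
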